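/- arXiv:1211.3141 — 3 statements merged into one kernel-verified Lean document; each statement's English description precedes it below -/
import Mathlib

section
/- For any bipartite density operator ρ_AB on H_A ⊗ H_B, the operator inequality |A| · (I_A ⊗ ρ_B) ≥ ρ_AB holds, where |A| = dim H_A and ρ_B = Tr_A(ρ_AB). -/
open Matrix Kronecker
open scoped ComplexOrder

/-- Hypothesis testing quantity `β_ε(ρ‖σ) = (1/ε) min{Tr(Qσ) : 0 ≤ Q ≤ I, Tr(Qρ) ≥ ε}`. -/
noncomputable def betaHT {ι : Type*} [Fintype ι] [DecidableEq ι]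
    (ε : ℝ) (ρ σ : Matrix ι ι ℂ) : ℝ :=
  sInf { r : ℝ | ∃ Q : Matrix ι ι ℂ, Q.PosSemidef ∧ ((1 : Matrix ι ι ℂ) - Q).PosSemidef ∧
    ε ≤ ((Q * ρ).trace).re ∧ r = ((Q * σ).trace).re / ε }

/-- Hypothesis testing relative entropy `D_H^ε(ρ‖σ) = -log₂ β_ε(ρ‖σ)`. -/
noncomputable def DH {ι : Type*} [Fintype ι] [DecidableEq ι]
    (ε : ℝ) (ρ σ : Matrix ι ι ℂ) : ℝ :=
  - Real.logb 2 (betaHT ε ρ σ)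

/-- Partial trace over the first (A) factor. -/
noncomputable def ptraceA {α β : Type*} [Fintype α]
    (ρ : Matrix (α × β) (α × β) ℂ) : Matrix β β ℂ :=
  fun b b' => ∑ a, ρ (a, b) (a, b')

/-- Conditional hypothesis testing entropy `H_H^ε(A|B)_ρ = -D_H^ε(ρ_AB ‖ I_A ⊗ ρ_B)`. -/
noncomputable def HH {α β : Type*} [Fintype α] [Fintype β] [DecidableEq α] [DecidableEq β]
    (ε : ℝ) (ρ : Matrix (α × β) (α × β) ℂ) : ℝ :=
  Real.logb 2 (betaHT ε ρ ((1 : Matrix α α ℂ) ⊗ₖ ptraceA ρ))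

/-- for any bipartite density operator ρ_AB,
|A|·(I_A ⊗ ρ_B) ≥ ρ_AB. -/
theorem dimA_smul_id_kron_marginal_ge {dA dB : ℕ}
    (ρ : Matrix (Fin dA × Fin dB) (Fin dA × Fin dB) ℂ)
    (hρ : ρ.PosSemidef) (hρ1 : ρ.trace = 1) :
    ((dA : ℂ) • ((1 : Matrix (Fin dA) (Fin dA) ℂ) ⊗ₖ ptraceA ρ) - ρ).PosSemidef := by
  classical
  have hB : (ptraceA ρ).IsHermitian := by
    ext b b'
    simp [ptraceA, Matrix.conjTranspose_apply, star_sum, hρ.1.apply]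
  refine Matrix.PosSemidef.of_dotProduct_mulVec_nonneg ?_ ?_
  · ext ⟨a, b⟩ ⟨a', b'⟩
    simp only [Matrix.conjTranspose_apply, Matrix.sub_apply, Matrix.smul_apply, kroneckerMap_apply,
      Matrix.one_apply, smul_eq_mul, star_sub, star_mul']
    rw [hρ.1.apply, hB.apply]
    simp [eq_comm]
  · intro x
    -- the bilinear blocks
    set C : Fin dA → Fin dA → Fin dA → Fin dA → ℂ :=
      fun a c a' c' => ∑ b, ∑ b', star (x (a, b)) * (ρ (c, b) (c', b') * x (a', b')) with hCdef
    set z : Fin dA → Fin dA → (Fin dA × Fin dB → ℂ) :=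
      fun a c p => if p.1 = c then x (a, p.2) else 0 with hzdef
    have hC : ∀ a c a' c', star (z a c) ⬝ᵥ ρ *ᵥ (z a' c') = C a c a' c' := by
      intro a c a' c'
      simp [hzdef, hCdef, dotProduct, mulVec, Fintype.sum_prod_type, Finset.mul_sum, mul_assoc,
        apply_ite, ite_mul, mul_ite, Finset.sum_ite_eq, Finset.sum_ite_eq', Pi.star_apply]
    have hnn : ∀ a c, 0 ≤ C a c a c := by
      intro a c
      have h := hρ.dotProduct_mulVec_nonneg (z a c)
      rwa [hC] at h
    have hG : ∀ a a', 0 ≤ C a a a a - C a a a' a' - (C a' a' a a - C a' a' a' a') := by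
      intro a a'
      have h := hρ.dotProduct_mulVec_nonneg (z a a - z a' a')
      rwa [star_sub, Matrix.mulVec_sub, sub_dotProduct, dotProduct_sub,
        dotProduct_sub, hC, hC, hC, hC] at h
    have step2 : star x ⬝ᵥ ρ *ᵥ x = ∑ a, ∑ a', C a a a' a' := by
      simp only [hCdef, dotProduct, mulVec, Fintype.sum_prod_type, Finset.mul_sum, mul_assoc,
        Pi.star_apply]
      exact Finset.sum_congr rfl fun a _ => Finset.sum_comm
    have step1 : star x ⬝ᵥ ((1 : Matrix (Fin dA) (Fin dA) ℂ) ⊗ₖ ptraceA ρ) *ᵥ x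
        = ∑ a, ∑ c, C a c a c := by
      simp only [hCdef, dotProduct, mulVec, Fintype.sum_prod_type, kroneckerMap_apply,
        Matrix.one_apply, ptraceA, Finset.mul_sum, Finset.sum_mul, mul_assoc, Pi.star_apply,
        ite_mul, one_mul, zero_mul, mul_ite, mul_zero, mul_one, Finset.sum_ite_irrel,
        Finset.sum_const_zero, Finset.sum_ite_eq, Finset.sum_ite_eq']
      refine Finset.sum_congr rfl fun a _ => ?_
      rw [show (∑ b, ∑ b', ∑ c, star (x (a, b)) * (ρ (c, b) (c, b') * x (a, b')))
          = ∑ c, ∑ b, ∑ b', star (x (a, b)) * (ρ (c, b) (c, b') * x (a, b')) from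
        (Finset.sum_congr rfl fun b _ => Finset.sum_comm).trans Finset.sum_comm]
      simp
    have hLHS : star x ⬝ᵥ (((dA : ℂ) • ((1 : Matrix (Fin dA) (Fin dA) ℂ) ⊗ₖ ptraceA ρ) - ρ) *ᵥ x)
        = (dA : ℂ) * (∑ a, ∑ c, C a c a c) - ∑ a, ∑ a', C a a a' a' := by
      rw [Matrix.sub_mulVec, dotProduct_sub, Matrix.smul_mulVec,
        dotProduct_smul, step1, step2, smul_eq_mul]
    rw [hLHS]
    -- sum identities
    have e1 : (∑ a, ∑ c, if a = c then (0:ℂ) else C a c a c)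
        = (∑ a, ∑ c, C a c a c) - ∑ a, C a a a a := by
      have h : ∀ a c : Fin dA, (if a = c then (0:ℂ) else C a c a c)
          = C a c a c - (if a = c then C a c a c else 0) := by
        intro a c; split <;> simp
      simp_rw [h, Finset.sum_sub_distrib, Finset.sum_ite_eq, Finset.mem_univ, if_true]
    have swap : (∑ a, ∑ a', C a' a' a a) = ∑ a, ∑ a', C a a a' a' := Finset.sum_comm
    have e2 : (∑ a, ∑ a', (C a a a a - C a a a' a' - (C a' a' a a - C a' a' a' a')))
        = (dA : ℂ) * (∑ a, C a a a a) + (dA : ℂ) * (∑ a, C a a a a)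
          - (∑ a, ∑ a', C a a a' a') - (∑ a, ∑ a', C a a a' a') := by
      simp_rw [Finset.sum_sub_distrib, Finset.sum_const, Finset.card_univ, Fintype.card_fin,
        nsmul_eq_mul, ← Finset.mul_sum, swap]
      ring
    have key : (dA : ℂ) * (∑ a, ∑ c, C a c a c) - ∑ a, ∑ a', C a a a' a'
        = (dA : ℂ) * (∑ a, ∑ c, if a = c then (0:ℂ) else C a c a c)
          + (2⁻¹ : ℂ) * (∑ a, ∑ a', (C a a a a - C a a a' a' - (C a' a' a a - C a' a' a' a'))) := by
      rw [e1, e2]; ring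
    rw [key]
    have hdA : (0:ℂ) ≤ (dA : ℂ) := by
      rw [Complex.le_def]; simp
    have h2 : (0:ℂ) ≤ (2⁻¹ : ℂ) := by
      rw [Complex.le_def]; norm_num
    refine add_nonneg (mul_nonneg hdA ?_) (mul_nonneg h2 ?_)
    · refine Finset.sum_nonneg fun a _ => Finset.sum_nonneg fun c _ => ?_
      split
      · exact le_refl 0
      · exact hnn a c
    · exact Finset.sum_nonneg fun a _ => Finset.sum_nonneg fun a' _ => hG a a'
end

section
/- For a classical-quantum state ρ_XB = Σ_x p(x)|x⟩⟨x| ⊗ ρ_B^x, the conditional hypothesis testing entropy is nonnegative: H_H^ε(X|B)_ρ ≥ 0, for all 0 < ε ≤ 1. -/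
open Matrix Kronecker
open scoped ComplexOrder

/-! ### Auxiliary lemmas -/

lemma trace_re_nonneg_of_psd {ι : Type*} [Fintype ι] [DecidableEq ι] {A : Matrix ι ι ℂ}
    (hA : A.PosSemidef) : 0 ≤ A.trace.re := by
  have h : ∀ i, 0 ≤ (A i i).re := fun i => by
    have := hA.re_dotProduct_nonneg (Pi.single i 1)
    simpa [dotProduct, mulVec, Pi.single_apply, apply_ite, Finset.sum_ite_eq,
      mul_comm] using this
  rw [Matrix.trace, Complex.re_sum]
  exact Finset.sum_nonneg fun i _ => h i

lemma trace_mul_psd_nonneg {ι : Type*} [Fintype ι] [DecidableEq ι] {A B : Matrix ι ι ℂ}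
    (hA : A.PosSemidef) (hB : B.PosSemidef) : 0 ≤ ((A * B).trace).re := by
  obtain ⟨C, rfl⟩ : ∃ C : Matrix ι ι ℂ, B = Cᴴ * C := by
    open scoped MatrixOrder Matrix.Norms.L2Operator in
    exact CStarAlgebra.nonneg_iff_eq_star_mul_self.mp (Matrix.nonneg_iff_posSemidef.mpr hB)
  have : (A * (Cᴴ * C)).trace = (C * A * Cᴴ).trace := by
    rw [← mul_assoc, Matrix.trace_mul_comm, ← mul_assoc]
  rw [this]
  exact trace_re_nonneg_of_psd (hA.mul_mul_conjTranspose_same C)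

lemma psd_real_smul {ι : Type*} [Fintype ι] {A : Matrix ι ι ℂ}
    (hA : A.PosSemidef) {c : ℝ} (hc : 0 ≤ c) : ((c : ℂ) • A).PosSemidef := by
  refine Matrix.PosSemidef.of_dotProduct_mulVec_nonneg ?_ ?_
  · unfold Matrix.IsHermitian
    rw [conjTranspose_smul, hA.isHermitian.eq]
    norm_num
  · intro x
    rw [smul_mulVec, dotProduct_smul]
    exact smul_nonneg (by positivity) (hA.dotProduct_mulVec_nonneg x)

lemma psd_sum {γ ι : Type*} [Fintype ι] (s : Finset γ) (f : γ → Matrix ι ι ℂ)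
    (h : ∀ i ∈ s, (f i).PosSemidef) : (∑ i ∈ s, f i).PosSemidef := by
  classical
  induction s using Finset.induction_on with
  | empty => simpa using Matrix.PosSemidef.zero
  | insert a s hx ih =>
    rw [Finset.sum_insert hx]
    exact (h _ (Finset.mem_insert_self _ _)).add
      (ih fun i hi => h i (Finset.mem_insert_of_mem hi))

lemma psd_blockDiag {α β : Type*} [Fintype α] [Fintype β] [DecidableEq α]
    (M : α → Matrix β β ℂ) (hM : ∀ a, (M a).PosSemidef) :
    Matrix.PosSemidef (Matrix.of fun (x : α × β) (y : α × β) =>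
      if x.1 = y.1 then M x.1 x.2 y.2 else 0) := by
  refine Matrix.PosSemidef.of_dotProduct_mulVec_nonneg ?_ ?_
  · ext ⟨a, b⟩ ⟨a', b'⟩
    simp only [conjTranspose_apply, Matrix.of_apply]
    by_cases h : a = a'
    · subst h
      simp [(hM a).isHermitian.apply]
    · simp [h, Ne.symm h]
  · intro v
    have expand : dotProduct (star v)
          ((Matrix.of fun (x : α × β) (y : α × β) =>
            if x.1 = y.1 then M x.1 x.2 y.2 else 0) *ᵥ v)
        = ∑ a, dotProduct (star fun b => v (a, b)) (M a *ᵥ fun b => v (a, b)) := by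
      simp only [dotProduct, mulVec, Fintype.sum_prod_type, Pi.star_apply, Matrix.of_apply,
        ite_mul, zero_mul]
      refine Finset.sum_congr rfl fun a _ => ?_
      refine Finset.sum_congr rfl fun b _ => ?_
      congr 1
      rw [Finset.sum_comm]
      simp
    rw [expand]
    exact Finset.sum_nonneg fun a _ => (hM a).dotProduct_mulVec_nonneg _

lemma logb_sInf_nonneg (S : Set ℝ) (h : ∀ r ∈ S, 1 ≤ r) :
    0 ≤ Real.logb 2 (sInf S) := by
  rcases S.eq_empty_or_nonempty with rfl | hS
  · simp
  · exact Real.logb_nonneg one_lt_two (le_csInf hS h)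

/-- for a classical-quantum state ρ_XB = ∑ₓ p(x)|x⟩⟨x| ⊗ ρ_B^x,
H_H^ε(X|B)_ρ ≥ 0. -/
theorem HH_cq_nonneg {dX : ℕ} {β : Type*} [Fintype β] [DecidableEq β]
    (p : Fin dX → ℝ) (hp0 : ∀ x, 0 ≤ p x) (hp1 : ∑ x, p x = 1)
    (ρB : Fin dX → Matrix β β ℂ)
    (hB : ∀ x, (ρB x).PosSemidef) (hB1 : ∀ x, (ρB x).trace = 1)
    (ε : ℝ) (hε0 : 0 < ε) (hε1 : ε ≤ 1) :
    0 ≤ HH ε (∑ x : Fin dX, (p x : ℂ) • (Matrix.single x x 1 ⊗ₖ ρB x)) := by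
  classical
  set ρ : Matrix (Fin dX × β) (Fin dX × β) ℂ :=
    ∑ x : Fin dX, (p x : ℂ) • (Matrix.single x x 1 ⊗ₖ ρB x) with hρdef
  have hT : ∀ a : Fin dX,
      ((∑ z : Fin dX, (p z : ℂ) • ρB z) - (p a : ℂ) • ρB a).PosSemidef := fun a => by
    rw [← Finset.sum_erase_eq_sub (Finset.mem_univ a)]
    exact psd_sum _ _ fun y _ => psd_real_smul (hB y) (hp0 y)
  have hdiff : (1 : Matrix (Fin dX) (Fin dX) ℂ) ⊗ₖ ptraceA ρ - ρ
      = Matrix.of fun (x y : Fin dX × β) =>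
        if x.1 = y.1
        then ((∑ z : Fin dX, (p z : ℂ) • ρB z) - (p x.1 : ℂ) • ρB x.1) x.2 y.2 else 0 := by
    ext ⟨a, b⟩ ⟨a', b'⟩
    simp only [hρdef, Matrix.sub_apply, Matrix.of_apply, kroneckerMap_apply, ptraceA,
      Matrix.sum_apply, Matrix.smul_apply, Matrix.one_apply, Matrix.single,
      smul_eq_mul]
    by_cases h : a = a'
    · subst h
      simp [Finset.mul_sum, Finset.sum_ite_eq, mul_comm, mul_assoc, mul_left_comm]
    · simp only [h, if_false, zero_mul, zero_sub, neg_eq_zero]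
      refine Finset.sum_eq_zero fun x _ => ?_
      have hx : ¬(x = a ∧ x = a') := by rintro ⟨rfl, rfl⟩; exact h rfl
      simp [hx]
  have hpsd : ((1 : Matrix (Fin dX) (Fin dX) ℂ) ⊗ₖ ptraceA ρ - ρ).PosSemidef := by
    rw [hdiff]
    exact psd_blockDiag _ fun a => hT a
  unfold HH betaHT
  apply logb_sInf_nonneg
  rintro r ⟨Q, hQ, -, hQρ, rfl⟩
  have h1 : 0 ≤ ((Q * ((1 : Matrix (Fin dX) (Fin dX) ℂ) ⊗ₖ ptraceA ρ - ρ)).trace).re :=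
    trace_mul_psd_nonneg hQ hpsd
  rw [mul_sub, Matrix.trace_sub, Complex.sub_re, sub_nonneg] at h1
  rw [le_div_iff₀ hε0, one_mul]
  exact le_trans hQρ h1
end

section
/- Gentle measurement bound (Lemma from Berta et al.): for a subnormalized state ρ and operator 0 ≤ Π ≤ I, the purified distance satisfies P(ρ, ΠρΠ) ≤ (1/√Tr ρ)·√((Tr ρ)² − (Tr(Π²ρ))²). -/
open Matrix Kronecker
open scoped ComplexOrder

/-- Trace norm `‖A‖₁ = Tr √(AᴴA)`, as the sum of singular values. -/
noncomputable def traceNorm {ι : Type*} [Fintype ι] [DecidableEq ι] (A : Matrix ι ι ℂ) : ℝ :=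
  ∑ i, Real.sqrt ((Matrix.posSemidef_conjTranspose_mul_self A).1.eigenvalues i)

/-- Square root of a positive semidefinite matrix (junk value 0 otherwise). -/
noncomputable def msqrt {ι : Type*} [Fintype ι] [DecidableEq ι]
    (A : Matrix ι ι ℂ) : Matrix ι ι ℂ :=
  @dite _ A.PosSemidef (Classical.dec _) (fun h => h.1.eigenvectorUnitary.1 *
    diagonal ((↑) ∘ Real.sqrt ∘ h.1.eigenvalues) * (star h.1.eigenvectorUnitary : Matrix ι ι ℂ)) (fun _ => 0)

/-- Generalized fidelity F̄(ρ,σ) = ‖√ρ√σ‖₁ + √((1−Tr ρ)(1−Tr σ)). -/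
noncomputable def genFid {ι : Type*} [Fintype ι] [DecidableEq ι]
    (ρ σ : Matrix ι ι ℂ) : ℝ :=
  traceNorm (msqrt ρ * msqrt σ) + Real.sqrt ((1 - ρ.trace.re) * (1 - σ.trace.re))

/-- Purified distance P(ρ,σ) = √(1 − F̄(ρ,σ)²). -/
noncomputable def pDist {ι : Type*} [Fintype ι] [DecidableEq ι]
    (ρ σ : Matrix ι ι ℂ) : ℝ :=
  Real.sqrt (1 - genFid ρ σ ^ 2)

namespace Matrix.PosSemidef

variable {ι : Type*} [Fintype ι] [DecidableEq ι]

noncomputable def sqrt {A : Matrix ι ι ℂ} (h : A.PosSemidef) : Matrix ι ι ℂ :=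
  h.1.eigenvectorUnitary.1 * diagonal ((↑) ∘ Real.sqrt ∘ h.1.eigenvalues) *
    (star h.1.eigenvectorUnitary : Matrix ι ι ℂ)

lemma posSemidef_sqrt {A : Matrix ι ι ℂ} (h : A.PosSemidef) : h.sqrt.PosSemidef := by
  unfold sqrt
  have hD : (diagonal ((↑) ∘ Real.sqrt ∘ h.1.eigenvalues : ι → ℂ)).PosSemidef := by
    rw [posSemidef_diagonal_iff]
    intro i
    simp [Real.sqrt_nonneg]
  simpa [star_eq_conjTranspose] using
    hD.mul_mul_conjTranspose_same (h.1.eigenvectorUnitary : Matrix ι ι ℂ)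

lemma sqrt_mul_self {A : Matrix ι ι ℂ} (h : A.PosSemidef) : h.sqrt * h.sqrt = A := by
  unfold sqrt
  conv_rhs => rw [h.1.spectral_theorem, Unitary.conjStarAlgAut_apply]
  have hU : (star h.1.eigenvectorUnitary : Matrix ι ι ℂ) * h.1.eigenvectorUnitary.1 = 1 :=
    Unitary.coe_star_mul_self _
  have key : ∀ (U D S : Matrix ι ι ℂ), S * U = 1 → U * D * S * (U * D * S) = U * (D * D) * S := by
    intro U D S hSU
    simp only [Matrix.mul_assoc]
    rw [← Matrix.mul_assoc S U, hSU, Matrix.one_mul]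
  rw [key _ _ _ hU, diagonal_mul_diagonal]
  congr 3
  funext i
  simp [← Complex.ofReal_mul, Real.mul_self_sqrt (h.eigenvalues_nonneg i)]

end Matrix.PosSemidef

section Aux

open Polynomial

variable {ι : Type*} [Fintype ι] [DecidableEq ι]

private lemma eval_charpoly' (M : Matrix ι ι ℂ) (x : ℂ) :
    (M.charpoly).eval x = (x • (1 : Matrix ι ι ℂ) - M).det := by
  rw [Matrix.charpoly, ← Polynomial.coe_evalRingHom, RingHom.map_det]
  congr 1
  ext i j
  by_cases h : i = j
  · subst h
    simp [charmatrix_apply_eq, Matrix.one_apply_eq]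
  · simp [charmatrix_apply_ne _ _ _ h, Matrix.one_apply_ne h]

private lemma charpoly_mul_comm' (A B : Matrix ι ι ℂ) : (A * B).charpoly = (B * A).charpoly := by
  apply Polynomial.eq_of_infinite_eval_eq
  apply Set.Infinite.mono (s := ({(0:ℂ)}ᶜ : Set ℂ)) ?_ ((Set.finite_singleton (0:ℂ)).infinite_compl)
  intro x hx
  simp only [Set.mem_compl_iff, Set.mem_singleton_iff] at hx
  simp only [Set.mem_setOf_eq]
  have gen : ∀ (C D : Matrix ι ι ℂ),
      (x • (1:Matrix ι ι ℂ) - C * D).det = x ^ (Fintype.card ι) * (1 - (x⁻¹ • C) * D).det := by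
    intro C D
    have h1 : x • ((1:Matrix ι ι ℂ) - (x⁻¹ • C) * D) = x • 1 - C * D := by
      rw [smul_sub, Matrix.smul_mul, smul_smul, mul_inv_cancel₀ hx, one_smul]
    rw [← h1, Matrix.det_smul]
  rw [eval_charpoly', eval_charpoly', gen A B, gen B A]
  congr 1
  rw [Matrix.det_one_sub_mul_comm, Matrix.mul_smul, ← Matrix.smul_mul]

private lemma charpoly_unit_conj' (U A : Matrix ι ι ℂ) (hU : U * star U = 1) :
    (U * A * star U).charpoly = A.charpoly := by
  rw [Matrix.mul_assoc, _root_.charpoly_mul_comm', Matrix.mul_assoc,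
    mul_eq_one_comm.mp hU, Matrix.mul_one]

private lemma charpoly_diagonal' (v : ι → ℂ) :
    (Matrix.diagonal v).charpoly = ∏ i, (X - C (v i)) := by
  rw [Matrix.charpoly]
  have h : charmatrix (Matrix.diagonal v) = Matrix.diagonal (fun i => (X:ℂ[X]) - C (v i)) := by
    ext i j
    by_cases h : i = j
    · subst h; simp [charmatrix_apply_eq]
    · simp [charmatrix_apply_ne _ _ _ h, Matrix.diagonal_apply_ne _ h]
  rw [h, Matrix.det_diagonal]

private lemma hermitian_charpoly' {A : Matrix ι ι ℂ} (hA : A.IsHermitian) :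
    A.charpoly = ∏ i, (X - C ((hA.eigenvalues i : ℝ) : ℂ)) := by
  have hU : (hA.eigenvectorUnitary : Matrix ι ι ℂ)
      * star (hA.eigenvectorUnitary : Matrix ι ι ℂ) = 1 :=
    (Matrix.mem_unitaryGroup_iff).mp hA.eigenvectorUnitary.2
  conv_lhs => rw [hA.spectral_theorem]
  rw [Unitary.conjStarAlgAut_apply, charpoly_unit_conj' _ _ hU]
  rw [show (RCLike.ofReal ∘ hA.eigenvalues : ι → ℂ) = fun i => ((hA.eigenvalues i : ℝ) : ℂ)
    from rfl]
  exact charpoly_diagonal' _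

private lemma prod_X_sub_C_inj {μ ν : ι → ℝ}
    (h : (∏ i, (X - C ((μ i : ℝ) : ℂ))) = ∏ i, (X - C ((ν i : ℝ) : ℂ))) (f : ℝ → ℝ) :
    ∑ i, f (μ i) = ∑ i, f (ν i) := by
  have key : ∀ (g : ι → ℝ), (∏ i, (X - C ((g i : ℝ) : ℂ))).roots
      = Finset.univ.val.map (fun i => ((g i : ℝ) : ℂ)) := by
    intro g
    have : (∏ i, (X - C ((g i : ℝ) : ℂ)))
        = ((Finset.univ.val.map (fun i => ((g i : ℝ) : ℂ))).map (fun a => X - C a)).prod := by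
      rw [Multiset.map_map]
      rfl
    rw [this, Polynomial.roots_multiset_prod_X_sub_C]
  have hm : Finset.univ.val.map (fun i => ((μ i : ℝ) : ℂ))
      = Finset.univ.val.map (fun i => ((ν i : ℝ) : ℂ)) := by
    rw [← key μ, ← key ν, h]
  have hr : Finset.univ.val.map μ = Finset.univ.val.map ν := by
    have := congrArg (Multiset.map Complex.re) hm
    simpa [Multiset.map_map, Function.comp] using this
  calc ∑ i, f (μ i) = ((Finset.univ.val.map μ).map f).sum := by rw [Multiset.map_map]; rfl
    _ = ((Finset.univ.val.map ν).map f).sum := by rw [hr]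
    _ = ∑ i, f (ν i) := by rw [Multiset.map_map]; rfl

private lemma herm_trace_re' {A : Matrix ι ι ℂ} (hA : A.IsHermitian) :
    A.trace.re = ∑ i, hA.eigenvalues i := by
  have hU : (hA.eigenvectorUnitary : Matrix ι ι ℂ)
      * star (hA.eigenvectorUnitary : Matrix ι ι ℂ) = 1 :=
    (Matrix.mem_unitaryGroup_iff).mp hA.eigenvectorUnitary.2
  conv_lhs => rw [hA.spectral_theorem]
  rw [Unitary.conjStarAlgAut_apply, Matrix.trace_mul_cycle, mul_eq_one_comm.mp hU, Matrix.one_mul, Matrix.trace_diagonal]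
  have : ∑ i, (RCLike.ofReal ∘ hA.eigenvalues) i = ((∑ i, hA.eigenvalues i : ℝ) : ℂ) := by
    push_cast
    rfl
  rw [this, Complex.ofReal_re]

private lemma psd_trace_re_nonneg' {Z : Matrix ι ι ℂ} (hZ : Z.PosSemidef) : 0 ≤ Z.trace.re := by
  rw [herm_trace_re' hZ.1]
  exact Finset.sum_nonneg fun i _ => hZ.eigenvalues_nonneg i

private lemma trace_mul_psd_nonneg' {X Y : Matrix ι ι ℂ} (hX : X.PosSemidef) (hY : Y.PosSemidef) :
    0 ≤ ((X * Y).trace).re := by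
  have h1 : (X * Y).trace = (hX.sqrt * Y * hX.sqrt).trace := by
    rw [Matrix.trace_mul_cycle, hX.sqrt_mul_self]
  have h2 : (hX.sqrt * Y * hX.sqrt).PosSemidef := by
    have := hY.conjTranspose_mul_mul_same hX.sqrt
    rwa [hX.posSemidef_sqrt.1] at this
  rw [h1]
  exact psd_trace_re_nonneg' h2

private lemma traceNorm_eq' {ρ Pm : Matrix ι ι ℂ} (hρ : ρ.PosSemidef) (hP : Pm.PosSemidef)
    (hσ : (Pm * ρ * Pm).PosSemidef) :
    traceNorm (hρ.sqrt * hσ.sqrt) = ((Pm * ρ).trace).re := by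
  set r := hρ.sqrt with hr
  set q := hσ.sqrt with hqdef
  set Cm := r * Pm * r with hCm
  set M := r * q with hM
  have hrr : r * r = ρ := hρ.sqrt_mul_self
  have hqq : q * q = Pm * ρ * Pm := hσ.sqrt_mul_self
  have hC : Cm.PosSemidef := by
    have := hP.conjTranspose_mul_mul_same r
    rwa [hρ.posSemidef_sqrt.1] at this
  have hMH : Mᴴ = q * r := by
    rw [hM, Matrix.conjTranspose_mul, hσ.posSemidef_sqrt.1, hρ.posSemidef_sqrt.1]
  have e1 : M * Mᴴ = Cm * Cm := by
    rw [hMH, hM]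
    have h1 : r * q * (q * r) = r * (q * q) * r := by noncomm_ring
    rw [h1, hqq, hCm, ← hrr]
    noncomm_ring
  set U : Matrix ι ι ℂ := (hC.1.eigenvectorUnitary : Matrix ι ι ℂ) with hUdef
  set lam := hC.1.eigenvalues with hlam
  have hU : U * star U = 1 := (Matrix.mem_unitaryGroup_iff).mp hC.1.eigenvectorUnitary.2
  have hU' : star U * U = 1 := mul_eq_one_comm.mp hU
  have e2 : Cm * Cm = U * (Matrix.diagonal (RCLike.ofReal ∘ lam) *
      Matrix.diagonal (RCLike.ofReal ∘ lam)) * star U := by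
    conv_lhs => rw [hC.1.spectral_theorem, Unitary.conjStarAlgAut_apply]
    simp only [Matrix.mul_assoc]
    rw [← Matrix.mul_assoc (star U) U, hU', Matrix.one_mul]
  have hMMherm := (Matrix.posSemidef_conjTranspose_mul_self M).1
  have e3 : (Mᴴ * M).charpoly = ∏ i, (X - C ((((lam i)^2 : ℝ)) : ℂ)) := by
    rw [_root_.charpoly_mul_comm', e1, e2, charpoly_unit_conj' _ _ hU, Matrix.diagonal_mul_diagonal]
    rw [show (fun i => (RCLike.ofReal ∘ lam) i * (RCLike.ofReal ∘ lam) i : ι → ℂ)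
        = fun i => (((lam i)^2 : ℝ) : ℂ) from by
      funext i
      show (Complex.ofReal (lam i)) * (Complex.ofReal (lam i)) = ((lam i ^ 2 : ℝ) : ℂ)
      push_cast
      ring]
    exact charpoly_diagonal' _
  have e4 : ∑ i, Real.sqrt (hMMherm.eigenvalues i) = ∑ i, Real.sqrt ((lam i)^2) :=
    prod_X_sub_C_inj ((hermitian_charpoly' hMMherm).symm.trans e3) Real.sqrt
  have e5 : ∑ i, Real.sqrt ((lam i)^2) = ∑ i, lam i := by
    refine Finset.sum_congr rfl fun i _ => ?_
    rw [Real.sqrt_sq (hC.eigenvalues_nonneg i)]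
  have e6 : Cm.trace = (Pm * ρ).trace := by
    rw [hCm, Matrix.trace_mul_cycle, hrr, Matrix.trace_mul_comm]
  calc traceNorm M = ∑ i, Real.sqrt (hMMherm.eigenvalues i) := rfl
    _ = ∑ i, lam i := by rw [e4, e5]
    _ = Cm.trace.re := (herm_trace_re' hC.1).symm
    _ = ((Pm * ρ).trace).re := by rw [e6]

end Aux

/-- gentle measurement bound:
P(ρ, ΠρΠ) ≤ (1/√Tr ρ)·√((Tr ρ)² − (Tr(Π²ρ))²) for 0 ≤ Π ≤ I. -/
theorem gentle_measurement {ι : Type*} [Fintype ι] [DecidableEq ι]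
    (ρ P : Matrix ι ι ℂ)
    (hρ : ρ.PosSemidef) (hρtr0 : 0 < ρ.trace.re) (hρtr1 : ρ.trace.re ≤ 1)
    (hP : P.PosSemidef) (hPle : ((1 : Matrix ι ι ℂ) - P).PosSemidef) :
    pDist ρ (P * ρ * P) ≤
      (1 / Real.sqrt ρ.trace.re) *
        Real.sqrt (ρ.trace.re ^ 2 - (((P * P * ρ).trace).re) ^ 2) := by
  have hσ : (P * ρ * P).PosSemidef := by
    have := hρ.mul_mul_conjTranspose_same P
    rwa [hP.1] at this
  set t := ρ.trace.re with ht
  set s := ((P * P * ρ).trace).re with hs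
  have hPP : (P * P).PosSemidef := by
    have := Matrix.posSemidef_conjTranspose_mul_self P
    rwa [hP.1] at this
  have hPmPP : (P - P * P).PosSemidef := by
    obtain ⟨u, hu, huH⟩ : ∃ u : Matrix ι ι ℂ, u * u = P ∧ uᴴ = u :=
      ⟨hP.sqrt, hP.sqrt_mul_self, hP.posSemidef_sqrt.1⟩
    have h := hPle.conjTranspose_mul_mul_same u
    rw [huH] at h
    have e : u * ((1 : Matrix ι ι ℂ) - P) * u = P - P * P := by
      rw [← hu]
      noncomm_ring
    rwa [e] at h
  have hOnePP : ((1 : Matrix ι ι ℂ) - P * P).PosSemidef := by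
    have e : (1 : Matrix ι ι ℂ) - P * P = ((1 : Matrix ι ι ℂ) - P) + (P - P * P) := by
      noncomm_ring
    rw [e]
    exact hPle.add hPmPP
  have hs0 : 0 ≤ s := trace_mul_psd_nonneg' hPP hρ
  have hst : s ≤ t := by
    have h := trace_mul_psd_nonneg' hOnePP hρ
    have e : (((1 : Matrix ι ι ℂ) - P * P) * ρ).trace = ρ.trace - (P * P * ρ).trace := by
      rw [Matrix.sub_mul, Matrix.one_mul, Matrix.trace_sub]
    rw [e, Complex.sub_re] at h
    rw [ht, hs]
    linarith
  set f := ((P * ρ).trace).re with hf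
  have hfs : s ≤ f := by
    have h := trace_mul_psd_nonneg' hPmPP hρ
    have e : ((P - P * P) * ρ).trace = (P * ρ).trace - (P * P * ρ).trace := by
      rw [Matrix.sub_mul, Matrix.trace_sub]
    rw [e, Complex.sub_re] at h
    rw [hf, hs]
    linarith
  have hσtr : ((P * ρ * P).trace).re = s := by
    rw [Matrix.trace_mul_cycle]
  have hmρ : msqrt ρ = hρ.sqrt := by unfold msqrt; exact dif_pos hρ
  have hmσ : msqrt (P * ρ * P) = hσ.sqrt := by unfold msqrt; exact dif_pos hσ
  have hTN : traceNorm (msqrt ρ * msqrt (P * ρ * P)) = f := by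
    rw [hmρ, hmσ]
    exact traceNorm_eq' hρ hP hσ
  set w := Real.sqrt ((1 - t) * (1 - s)) with hw
  have hgen : genFid ρ (P * ρ * P) = f + w := by
    unfold genFid
    rw [hTN, hσtr]
  have hw0 : 0 ≤ w := Real.sqrt_nonneg _
  have ht1' : 0 ≤ 1 - t := by linarith
  have hs1' : 0 ≤ 1 - s := by linarith
  have hw1 : 1 - t ≤ w := by
    have h1 : (1 - t) * (1 - t) ≤ (1 - t) * (1 - s) := by nlinarith
    calc 1 - t = Real.sqrt ((1 - t) * (1 - t)) := (Real.sqrt_mul_self ht1').symm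
      _ ≤ w := Real.sqrt_le_sqrt h1
  have hw2 : w ^ 2 = (1 - t) * (1 - s) := Real.sq_sqrt (mul_nonneg ht1' hs1')
  have hts : 0 ≤ t ^ 2 - s ^ 2 := by nlinarith
  have key : 1 - (f + w) ^ 2 ≤ (t ^ 2 - s ^ 2) / t := by
    have h1 : (s + w) ^ 2 ≤ (f + w) ^ 2 := by nlinarith
    have h2 : (1 - (s + w) ^ 2) * t ≤ t ^ 2 - s ^ 2 := by
      nlinarith [mul_nonneg (mul_nonneg hs0 ht1') (sub_nonneg.2 hst),
        mul_nonneg (mul_nonneg hρtr0.le hs0) (sub_nonneg.2 hw1)]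
    have h3 : 1 - (s + w) ^ 2 ≤ (t ^ 2 - s ^ 2) / t := (le_div_iff₀ hρtr0).2 h2
    linarith
  unfold pDist
  rw [hgen]
  calc Real.sqrt (1 - (f + w) ^ 2) ≤ Real.sqrt ((t ^ 2 - s ^ 2) / t) := Real.sqrt_le_sqrt key
    _ = Real.sqrt (t ^ 2 - s ^ 2) / Real.sqrt t := Real.sqrt_div hts t
    _ = (1 / Real.sqrt t) * Real.sqrt (t ^ 2 - s ^ 2) := by ring
end
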